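/- Weak duality holds: for every primal-feasible tuple (Θ₁,…,Θ_T) (each Θ_t symmetric with Θ_t − ε·I_p positive semidefinite) and every dual-feasible triple (W,Y,Z) (satisfying the dual feasibility constraints), one has f(Θ₁,…,Θ_T) ≥ g(W,Y,Z). -/

import Mathlib

open Matrix Finset

/-- Frobenius norm of a real `p × p` matrix. -/
noncomputable def frob {p : ℕ} (A : Matrix (Fin p) (Fin p) ℝ) : ℝ :=
  Real.sqrt (∑ u, ∑ v, (A u v) ^ 2)

namespace Aux

variable {p : ℕ}

/-- Frobenius inner product as a double sum. -/
def ip (A B : Matrix (Fin p) (Fin p) ℝ) : ℝ := ∑ u, ∑ v, A u v * B u v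

lemma frob_nonneg (A : Matrix (Fin p) (Fin p) ℝ) : 0 ≤ frob A := Real.sqrt_nonneg _

lemma frob_sq (A : Matrix (Fin p) (Fin p) ℝ) : frob A ^ 2 = ∑ u, ∑ v, (A u v) ^ 2 :=
  Real.sq_sqrt (by positivity)

lemma frob_neg (A : Matrix (Fin p) (Fin p) ℝ) : frob (-A) = frob A := by
  simp [frob]

lemma ip_add_left (A B C : Matrix (Fin p) (Fin p) ℝ) :
    ip (A + B) C = ip A C + ip B C := by
  simp [ip, add_mul, Finset.sum_add_distrib]

lemma ip_sub_left (A B C : Matrix (Fin p) (Fin p) ℝ) :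
    ip (A - B) C = ip A C - ip B C := by
  simp [ip, sub_mul, Finset.sum_sub_distrib]

lemma ip_sub_right (A B C : Matrix (Fin p) (Fin p) ℝ) :
    ip A (B - C) = ip A B - ip A C := by
  simp [ip, mul_sub, Finset.sum_sub_distrib]

lemma ip_zero_left (B : Matrix (Fin p) (Fin p) ℝ) : ip (0 : Matrix (Fin p) (Fin p) ℝ) B = 0 := by
  simp [ip]

/-- Cauchy–Schwarz for the Frobenius inner product. -/
lemma ip_le_frob (A B : Matrix (Fin p) (Fin p) ℝ) : ip A B ≤ frob A * frob B := by
  have h : (∑ x : Fin p × Fin p, A x.1 x.2 * B x.1 x.2) ^ 2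
      ≤ (∑ x : Fin p × Fin p, (A x.1 x.2) ^ 2) * (∑ x : Fin p × Fin p, (B x.1 x.2) ^ 2) :=
    Finset.sum_mul_sq_le_sq_mul_sq _ _ _
  have e1 : ip A B = ∑ x : Fin p × Fin p, A x.1 x.2 * B x.1 x.2 := by
    rw [ip]; exact (Fintype.sum_prod_type (f := fun x => A x.1 x.2 * B x.1 x.2)).symm
  have e2 : frob A ^ 2 = ∑ x : Fin p × Fin p, (A x.1 x.2) ^ 2 := by
    rw [frob_sq]; exact (Fintype.sum_prod_type (f := fun x => A x.1 x.2 ^ 2)).symm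
  have e3 : frob B ^ 2 = ∑ x : Fin p × Fin p, (B x.1 x.2) ^ 2 := by
    rw [frob_sq]; exact (Fintype.sum_prod_type (f := fun x => B x.1 x.2 ^ 2)).symm
  rw [← e1, ← e2, ← e3] at h
  nlinarith [frob_nonneg A, frob_nonneg B, h,
    mul_nonneg (frob_nonneg A) (frob_nonneg B)]

lemma trace_psd_nonneg {M : Matrix (Fin p) (Fin p) ℝ} (hM : M.PosSemidef) : 0 ≤ M.trace := by
  rw [Matrix.trace]
  refine Finset.sum_nonneg fun u _ => ?_
  exact hM.diag_nonneg

lemma trace_mul_psd_nonneg {M N : Matrix (Fin p) (Fin p) ℝ}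
    (hM : M.PosSemidef) (hN : N.PosSemidef) : 0 ≤ (M * N).trace := by
  obtain ⟨B, rfl⟩ : ∃ B : Matrix (Fin p) (Fin p) ℝ, N = Bᴴ * B := by
    open scoped MatrixOrder in exact CStarAlgebra.nonneg_iff_eq_star_mul_self.mp hN.nonneg
  have h : (M * (Bᴴ * B)).trace = (B * M * Bᴴ).trace := by
    rw [Matrix.trace_mul_comm M (Bᴴ * B), Matrix.mul_assoc, Matrix.trace_mul_comm Bᴴ (B * M)]
  rw [h]
  exact trace_psd_nonneg (hM.mul_mul_conjTranspose_same B)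

lemma ip_eq_trace (A B : Matrix (Fin p) (Fin p) ℝ) : ip A B = (Aᵀ * B).trace := by
  rw [Matrix.trace, ip, Finset.sum_comm]
  simp [Matrix.diag, Matrix.mul_apply]

/-- `ip` of two PSD matrices is nonnegative. -/
lemma ip_psd_nonneg {M N : Matrix (Fin p) (Fin p) ℝ}
    (hM : M.PosSemidef) (hN : N.PosSemidef) : 0 ≤ ip M N := by
  rw [ip_eq_trace]
  have : Mᵀ = M := by
    have := hM.1.eq
    rwa [Matrix.conjTranspose_eq_transpose_of_trivial] at this
  rw [this]
  exact trace_mul_psd_nonneg hM hN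

lemma ip_smul_one (c : ℝ) (M : Matrix (Fin p) (Fin p) ℝ) :
    ip M (c • (1 : Matrix (Fin p) (Fin p) ℝ)) = c * M.trace := by
  simp [ip, Matrix.one_apply, mul_ite, Matrix.trace, Matrix.diag, Finset.mul_sum, mul_comm]

end Aux

namespace Aux
variable {p : ℕ}

lemma abel (T : ℕ) (hT : 1 ≤ T) (Z Θ : ℕ → Matrix (Fin p) (Fin p) ℝ) :
    ∑ t ∈ Finset.Icc 1 T, ip (Z (t + 1) - Z t) (Θ t)
      = ip (Z (T + 1)) (Θ T) - ip (Z 1) (Θ 1)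
        + ∑ t ∈ Finset.Icc 2 T, ip (Z t) (Θ (t - 1) - Θ t) := by
  induction T, hT using Nat.le_induction with
  | base => simp [ip_sub_left]
  | succ n hn ih =>
    rw [Finset.sum_Icc_succ_top (by omega : 1 ≤ n + 1),
      Finset.sum_Icc_succ_top (by omega : 2 ≤ n + 1), ih]
    have hn1 : n + 1 - 1 = n := rfl
    rw [hn1]
    simp only [ip_sub_left, ip_sub_right]
    ring

lemma quad (Tr : ℝ) (hTr : 0 < Tr) (Wm D : Matrix (Fin p) (Fin p) ℝ) :
    ip Wm D ≤ Tr / 2 * frob Wm ^ 2 + 1 / (2 * Tr) * frob D ^ 2 := by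
  have h := ip_le_frob Wm D
  have key : Tr / 2 * frob Wm ^ 2 + 1 / (2 * Tr) * frob D ^ 2 - frob Wm * frob D
      = (Tr * frob Wm - frob D) ^ 2 / (2 * Tr) := by
    field_simp; ring
  nlinarith [sq_nonneg (Tr * frob Wm - frob D), div_nonneg (sq_nonneg (Tr * frob Wm - frob D)) (le_of_lt (by linarith : (0:ℝ) < 2 * Tr))]

end Aux
/-- The primal objective `f`, with time indices `t = 1, …, T`. -/
noncomputable def primalF (p T : ℕ) (X : ℕ → Fin p → ℝ) (lam1 lam2 : ℝ)
    (ξ1 : Fin p → Fin p → ℕ → ℝ) (ξ2 : ℕ → ℝ)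
    (Θ : ℕ → Matrix (Fin p) (Fin p) ℝ) : ℝ :=
  ∑ t ∈ Finset.Icc 1 T, (1 / (2 * (T : ℝ))) *
      (frob (Matrix.vecMulVec (X t) (X t) - Θ t)) ^ 2
    + lam1 * ∑ t ∈ Finset.Icc 1 T, ∑ u, ∑ v,
        (if u ≠ v then ξ1 u v t * |Θ t u v| else 0)
    + lam2 * ∑ t ∈ Finset.Icc 2 T, ξ2 t * frob (Θ t - Θ (t - 1))

/-- The dual objective `g` (with the conventions `Z 1 = 0`, `Z (T+1) = 0` imposed on
the dual variables). -/
noncomputable def dualG (p T : ℕ) (X : ℕ → Fin p → ℝ) (ε : ℝ)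
    (W Y Z : ℕ → Matrix (Fin p) (Fin p) ℝ) : ℝ :=
  ∑ t ∈ Finset.Icc 1 T,
    (-(T : ℝ) / 2 * (frob (W t)) ^ 2
      - ((W t)ᵀ * Matrix.vecMulVec (X t) (X t)).trace
      + ε * (Z (t + 1) - Z t + W t - Y t).trace)

/-- Primal feasibility: each `Θ t` is symmetric with `Θ t - ε • I` positive semidefinite. -/
def PrimalFeasible (p T : ℕ) (ε : ℝ) (Θ : ℕ → Matrix (Fin p) (Fin p) ℝ) : Prop :=
  ∀ t ∈ Finset.Icc 1 T, (Θ t).IsSymm ∧ (Θ t - ε • 1).PosSemidef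

/-- Dual feasibility of the triple `(W, Y, Z)`. -/
def DualFeasible (p T : ℕ) (lam1 lam2 : ℝ)
    (ξ1 : Fin p → Fin p → ℕ → ℝ) (ξ2 : ℕ → ℝ)
    (W Y Z : ℕ → Matrix (Fin p) (Fin p) ℝ) : Prop :=
  Z 1 = 0 ∧ Z (T + 1) = 0 ∧
  (∀ t ∈ Finset.Icc 1 T, (W t).IsSymm) ∧
  (∀ t ∈ Finset.Icc 1 T, (Y t).IsSymm ∧ ∀ u : Fin p, Y t u u = 0) ∧
  (∀ t ∈ Finset.Icc 2 T, (Z t).IsSymm) ∧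
  (∀ t ∈ Finset.Icc 1 T, (Z (t + 1) - Z t + W t - Y t).PosSemidef) ∧
  (∀ t ∈ Finset.Icc 2 T, frob (Z t) ≤ lam2 * ξ2 t) ∧
  (∀ t ∈ Finset.Icc 1 T, ∀ u v : Fin p, u ≠ v → |Y t u v| ≤ lam1 * ξ1 u v t)

/-- weak duality — the dual objective at any dual-feasible triple is at
most the primal objective at any primal-feasible tuple. -/
theorem stmt10 (p T : ℕ) (hp : 1 ≤ p) (hT : 1 ≤ T)
    (X : ℕ → Fin p → ℝ) (ε lam1 lam2 : ℝ)
    (hε : 0 < ε) (hlam1 : 0 ≤ lam1) (hlam2 : 0 < lam2)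
    (ξ1 : Fin p → Fin p → ℕ → ℝ)
    (hξ1 : ∀ u v : Fin p, u ≠ v → ∀ t ∈ Finset.Icc 1 T, 0 ≤ ξ1 u v t)
    (ξ2 : ℕ → ℝ) (hξ2 : ∀ t ∈ Finset.Icc 2 T, 0 < ξ2 t)
    (Θ : ℕ → Matrix (Fin p) (Fin p) ℝ)
    (hΘ : PrimalFeasible p T ε Θ)
    (W Y Z : ℕ → Matrix (Fin p) (Fin p) ℝ)
    (hWYZ : DualFeasible p T lam1 lam2 ξ1 ξ2 W Y Z) :
    dualG p T X ε W Y Z ≤ primalF p T X lam1 lam2 ξ1 ξ2 Θ := by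

  classical
  obtain ⟨hZ1, hZT1, hWs, hYs, hZs, hpsd, hZb, hYb⟩ := hWYZ
  set S : ℕ → Matrix (Fin p) (Fin p) ℝ := fun t => Matrix.vecMulVec (X t) (X t) with hS
  set M : ℕ → Matrix (Fin p) (Fin p) ℝ := fun t => Z (t + 1) - Z t + W t - Y t with hM
  have hTpos : (0 : ℝ) < (T : ℝ) := by exact_mod_cast hT
  -- Step A: rewrite dualG using ip
  have hdg : dualG p T X ε W Y Z
      = ∑ t ∈ Finset.Icc 1 T,
          (-(T : ℝ) / 2 * frob (W t) ^ 2 - Aux.ip (W t) (S t) + ε * (M t).trace) := by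
    unfold dualG
    refine Finset.sum_congr rfl fun t ht => ?_
    rw [← Aux.ip_eq_trace]
  -- Step B: ε·tr(M t) ≤ ⟨M t, Θ t⟩
  have hMΘ : ∀ t ∈ Finset.Icc 1 T, ε * (M t).trace ≤ Aux.ip (M t) (Θ t) := by
    intro t ht
    have h1 : 0 ≤ Aux.ip (M t) (Θ t - ε • 1) := Aux.ip_psd_nonneg (hpsd t ht) ((hΘ t ht).2)
    have h2 : Aux.ip (M t) (Θ t - ε • 1)
        = Aux.ip (M t) (Θ t) - ε * (M t).trace := by
      rw [Aux.ip_sub_right, Aux.ip_smul_one]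
    linarith
  -- Step C
  have hC : dualG p T X ε W Y Z
      ≤ ∑ t ∈ Finset.Icc 1 T,
          (-(T : ℝ) / 2 * frob (W t) ^ 2 - Aux.ip (W t) (S t) + Aux.ip (M t) (Θ t)) := by
    rw [hdg]
    refine Finset.sum_le_sum fun t ht => ?_
    have := hMΘ t ht
    linarith
  -- Step D: split off the Z-part
  have hD : ∑ t ∈ Finset.Icc 1 T,
        (-(T : ℝ) / 2 * frob (W t) ^ 2 - Aux.ip (W t) (S t) + Aux.ip (M t) (Θ t))
      = (∑ t ∈ Finset.Icc 1 T,
          (-(T : ℝ) / 2 * frob (W t) ^ 2 - Aux.ip (W t) (S t)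
            + Aux.ip (W t) (Θ t) - Aux.ip (Y t) (Θ t)))
        + ∑ t ∈ Finset.Icc 1 T, Aux.ip (Z (t + 1) - Z t) (Θ t) := by
    rw [← Finset.sum_add_distrib]
    refine Finset.sum_congr rfl fun t ht => ?_
    have hMt : M t = (Z (t + 1) - Z t) + W t - Y t := by
      simp only [hM]
    rw [hMt, Aux.ip_sub_left, Aux.ip_add_left]
    ring
  -- Step E: Abel summation
  have hE : ∑ t ∈ Finset.Icc 1 T, Aux.ip (Z (t + 1) - Z t) (Θ t)
      = ∑ t ∈ Finset.Icc 2 T, Aux.ip (Z t) (Θ (t - 1) - Θ t) := by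
    rw [Aux.abel T hT Z Θ, hZ1, hZT1, Aux.ip_zero_left, Aux.ip_zero_left]
    ring
  -- Step F: termwise bound of the first sum
  have hF : ∀ t ∈ Finset.Icc 1 T,
      -(T : ℝ) / 2 * frob (W t) ^ 2 - Aux.ip (W t) (S t)
          + Aux.ip (W t) (Θ t) - Aux.ip (Y t) (Θ t)
        ≤ 1 / (2 * (T : ℝ)) * frob (S t - Θ t) ^ 2
          + lam1 * ∑ u, ∑ v, (if u ≠ v then ξ1 u v t * |Θ t u v| else 0) := by
    intro t ht
    have hq : Aux.ip (W t) (Θ t - S t)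
        ≤ (T : ℝ) / 2 * frob (W t) ^ 2 + 1 / (2 * (T : ℝ)) * frob (Θ t - S t) ^ 2 :=
      Aux.quad (T : ℝ) hTpos _ _
    have hfr : frob (Θ t - S t) = frob (S t - Θ t) := by
      rw [← Aux.frob_neg (S t - Θ t), neg_sub]
    have hq2 : Aux.ip (W t) (Θ t) - Aux.ip (W t) (S t)
        ≤ (T : ℝ) / 2 * frob (W t) ^ 2 + 1 / (2 * (T : ℝ)) * frob (S t - Θ t) ^ 2 := by
      rw [← Aux.ip_sub_right, ← hfr]; exact hq
    have hY : -Aux.ip (Y t) (Θ t)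
        ≤ lam1 * ∑ u, ∑ v, (if u ≠ v then ξ1 u v t * |Θ t u v| else 0) := by
      have e : -Aux.ip (Y t) (Θ t) = ∑ u, ∑ v, -(Y t u v * Θ t u v) := by
        simp [Aux.ip]
      rw [e, Finset.mul_sum]
      refine Finset.sum_le_sum fun u _ => ?_
      rw [Finset.mul_sum]
      refine Finset.sum_le_sum fun v _ => ?_
      by_cases huv : u = v
      · subst huv
        simp [(hYs t ht).2 u]
      · have hne : u ≠ v := huv
        rw [if_pos hne]
        calc -(Y t u v * Θ t u v) ≤ |Y t u v * Θ t u v| := neg_le_abs _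
          _ = |Y t u v| * |Θ t u v| := abs_mul _ _
          _ ≤ (lam1 * ξ1 u v t) * |Θ t u v| :=
              mul_le_mul_of_nonneg_right (hYb t ht u v hne) (abs_nonneg _)
          _ = lam1 * (ξ1 u v t * |Θ t u v|) := by ring
    linarith
  -- Step G: termwise bound of the second sum
  have hG : ∀ t ∈ Finset.Icc 2 T,
      Aux.ip (Z t) (Θ (t - 1) - Θ t) ≤ lam2 * (ξ2 t * frob (Θ t - Θ (t - 1))) := by
    intro t ht
    have h1 : Aux.ip (Z t) (Θ (t - 1) - Θ t) ≤ frob (Z t) * frob (Θ (t - 1) - Θ t) :=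
      Aux.ip_le_frob _ _
    have hfr : frob (Θ (t - 1) - Θ t) = frob (Θ t - Θ (t - 1)) := by
      rw [← Aux.frob_neg (Θ t - Θ (t - 1)), neg_sub]
    have h2 : frob (Z t) * frob (Θ (t - 1) - Θ t)
        ≤ (lam2 * ξ2 t) * frob (Θ t - Θ (t - 1)) := by
      rw [hfr]
      exact mul_le_mul_of_nonneg_right (hZb t ht) (Aux.frob_nonneg _)
    calc Aux.ip (Z t) (Θ (t - 1) - Θ t) ≤ (lam2 * ξ2 t) * frob (Θ t - Θ (t - 1)) :=
          le_trans h1 h2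
      _ = lam2 * (ξ2 t * frob (Θ t - Θ (t - 1))) := by ring
  -- Combine
  have hP : primalF p T X lam1 lam2 ξ1 ξ2 Θ
      = (∑ t ∈ Finset.Icc 1 T,
          (1 / (2 * (T : ℝ)) * frob (S t - Θ t) ^ 2
            + lam1 * ∑ u, ∑ v, (if u ≠ v then ξ1 u v t * |Θ t u v| else 0)))
        + ∑ t ∈ Finset.Icc 2 T, lam2 * (ξ2 t * frob (Θ t - Θ (t - 1))) := by
    unfold primalF
    rw [Finset.mul_sum, Finset.mul_sum, ← Finset.sum_add_distrib]
  rw [hP]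
  calc dualG p T X ε W Y Z
      ≤ ∑ t ∈ Finset.Icc 1 T,
          (-(T : ℝ) / 2 * frob (W t) ^ 2 - Aux.ip (W t) (S t) + Aux.ip (M t) (Θ t)) := hC
    _ = (∑ t ∈ Finset.Icc 1 T,
          (-(T : ℝ) / 2 * frob (W t) ^ 2 - Aux.ip (W t) (S t)
            + Aux.ip (W t) (Θ t) - Aux.ip (Y t) (Θ t)))
        + ∑ t ∈ Finset.Icc 2 T, Aux.ip (Z t) (Θ (t - 1) - Θ t) := by rw [hD, hE]
    _ ≤ (∑ t ∈ Finset.Icc 1 T,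
          (1 / (2 * (T : ℝ)) * frob (S t - Θ t) ^ 2
            + lam1 * ∑ u, ∑ v, (if u ≠ v then ξ1 u v t * |Θ t u v| else 0)))
        + ∑ t ∈ Finset.Icc 2 T, lam2 * (ξ2 t * frob (Θ t - Θ (t - 1))) :=
        add_le_add (Finset.sum_le_sum hF) (Finset.sum_le_sum hG)
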